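/- Let b ≥ 2, and let h be the piecewise linear function through ((b^k-1)/(b^2-1), F_k), h̃ the piecewise linear function through ((b^k-1)/(b^2-1), φ^k/√5). Then for ã_k ≤ x ≤ ã_{k+1}, |h̃(x) - h(x)| ≤ φ^{-k}/√5. -/

import Mathlib

open Real

/-- ã_k = (b^k-1)/(b^2-1) as a real number. -/
noncomputable def atil (b k : ℕ) : ℝ := ((b : ℝ) ^ k - 1) / ((b : ℝ) ^ 2 - 1)

/-- `h` is the piecewise linear function through the points (a k, y k), k ≥ 0. -/
def IsPLThrough (a y : ℕ → ℝ) (h : ℝ → ℝ) : Prop :=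
  ∀ k : ℕ, ∀ x ∈ Set.Icc (a k) (a (k + 1)),
    h x = y k + (x - a k) * (y (k + 1) - y k) / (a (k + 1) - a k)

lemma abs_err (j : ℕ) :
    |goldenRatio ^ j / Real.sqrt 5 - (Nat.fib j : ℝ)| = (goldenRatio⁻¹) ^ j / Real.sqrt 5 := by
  rw [Real.coe_fib_eq]
  have h5 : (0:ℝ) < Real.sqrt 5 := Real.sqrt_pos.mpr (by norm_num)
  have : goldenRatio ^ j / Real.sqrt 5 - (goldenRatio ^ j - goldenConj ^ j) / Real.sqrt 5
      = goldenConj ^ j / Real.sqrt 5 := by ring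
  rw [this, abs_div, abs_pow, abs_of_pos h5]
  rw [inv_goldenRatio]
  congr 1
  exact congrArg (· ^ j) (abs_of_neg goldenConj_neg)

/-- For ã_k ≤ x ≤ ã_{k+1}, |h̃(x) - h(x)| ≤ φ^{-k}/√5. -/
theorem stmt16 (b : ℕ) (hb : 2 ≤ b) (h ht : ℝ → ℝ)
    (hh : IsPLThrough (atil b) (fun k => (Nat.fib k : ℝ)) h)
    (hht : IsPLThrough (atil b) (fun k => goldenRatio ^ k / Real.sqrt 5) ht)
    (k : ℕ) (x : ℝ) (hx : x ∈ Set.Icc (atil b k) (atil b (k + 1))) :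
    |ht x - h x| ≤ goldenRatio ^ (-(k : ℝ)) / Real.sqrt 5 := by
  have h5 : (0:ℝ) < Real.sqrt 5 := Real.sqrt_pos.mpr (by norm_num)
  have hb2 : (2:ℝ) ≤ (b:ℝ) := by exact_mod_cast hb
  have hden : (0:ℝ) < (b:ℝ) ^ 2 - 1 := by nlinarith
  have hd : 0 < atil b (k + 1) - atil b k := by
    unfold atil
    rw [div_sub_div _ _ hden.ne' hden.ne']
    apply div_pos _ (by positivity)
    have : (b:ℝ) ^ k < (b:ℝ) ^ (k+1) := by
      apply pow_lt_pow_right₀ (by linarith) (by omega)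
    nlinarith
  set a := atil b with ha
  set E := fun (j : ℕ) => goldenRatio ^ j / Real.sqrt 5 - (Nat.fib j : ℝ) with hE
  have key : ht x - h x = E k + (x - a k) * (E (k+1) - E k) / (a (k+1) - a k) := by
    rw [hht k x hx, hh k x hx]
    simp only [hE]
    field_simp
    ring
  set t := (x - a k) / (a (k+1) - a k) with htdef
  have ht0 : 0 ≤ t := div_nonneg (by linarith [hx.1]) hd.le
  have ht1 : t ≤ 1 := (div_le_one hd).mpr (by linarith [hx.2])
  have key2 : ht x - h x = (1 - t) * E k + t * E (k+1) := by
    rw [key, htdef]; field_simp; ring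
  have hMk : |E k| = goldenRatio⁻¹ ^ k / Real.sqrt 5 := abs_err k
  have hMk1 : |E (k+1)| ≤ goldenRatio⁻¹ ^ k / Real.sqrt 5 := by
    rw [abs_err (k+1)]
    apply div_le_div_of_nonneg_right _ h5.le
    apply pow_le_pow_of_le_one (by positivity) _ (by omega)
    rw [inv_le_one_iff₀]; right; exact one_lt_goldenRatio.le
  have hrpow : goldenRatio ^ (-(k : ℝ)) / Real.sqrt 5 = goldenRatio⁻¹ ^ k / Real.sqrt 5 := by
    rw [Real.rpow_neg goldenRatio_pos.le, Real.rpow_natCast, inv_pow]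
  rw [key2, hrpow]
  calc |(1 - t) * E k + t * E (k+1)| ≤ (1-t) * |E k| + t * |E (k+1)| := by
        refine (abs_add_le _ _).trans ?_
        rw [abs_mul, abs_mul, abs_of_nonneg (by linarith), abs_of_nonneg ht0]
    _ ≤ (1-t) * (goldenRatio⁻¹ ^ k / Real.sqrt 5) + t * (goldenRatio⁻¹ ^ k / Real.sqrt 5) := by
        gcongr; · linarith
    _ = goldenRatio⁻¹ ^ k / Real.sqrt 5 := by ring
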